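/- arXiv:1303.6930 — 2 statements merged into one kernel-verified Lean document; each statement's English description precedes it below -/
import Mathlib

section
/- Let D₁ and D₂ be the open unit disc, and let E_i ⊂ D_i be the annulus {z : s < |z| < 1} for fixed 0 < s < 1. Suppose g : E₁ → E₂ is a conformal homeomorphism mapping the unit circle boundary component to the unit circle boundary component. Then g extends by Schwarz reflection across the unit circle to a conformal homeomorphism of {z : s < |z| < 1/s} onto itself, and the induced boundary map on the unit circle extends to a K-quasiconformal homeomorphism of the closed disc {|z| ≤ 1} to itself, where K depends only on s. -/
open MeasureTheory

/-- The Wirtinger derivative `∂f/∂z = (f_x - i f_y)/2` of a real-linear map `L : ℂ → ℂ`. -/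
noncomputable def wirtD (L : ℂ →L[ℝ] ℂ) : ℂ := (L 1 - Complex.I * L Complex.I) / 2

/-- The Wirtinger derivative `∂f/∂z̄ = (f_x + i f_y)/2` of a real-linear map `L : ℂ → ℂ`. -/
noncomputable def wirtDbar (L : ℂ →L[ℝ] ℂ) : ℂ := (L 1 + Complex.I * L Complex.I) / 2

/-- `f` is `K`-quasiconformal on `s`. -/
def QuasiconformalOn (K : ℝ) (f : ℂ → ℂ) (s : Set ℂ) : Prop :=
  ∃ k : ℝ, 0 ≤ k ∧ k < 1 ∧ K = (1 + k) / (1 - k) ∧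
    ∀ᵐ z ∂(volume.restrict s), ∃ L : ℂ →L[ℝ] ℂ, HasFDerivAt f L z ∧
      ‖wirtDbar L‖ ≤ k * ‖wirtD L‖

/-- The annulus `{z : s < |z| < 1}`. -/
def annE (s : ℝ) : Set ℂ := {z : ℂ | s < ‖z‖ ∧ ‖z‖ < 1}

/-- The doubled annulus `{z : s < |z| < 1/s}`. -/
def annDoubled (s : ℝ) : Set ℂ := {z : ℂ | s < ‖z‖ ∧ ‖z‖ < 1 / s}



section Stmt10Aux

open Complex Set Filter

/-- Open annulus as preimage. -/
lemma ann_eq (a b : ℝ) : {z : ℂ | a < ‖z‖ ∧ ‖z‖ < b}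
    = (fun z : ℂ => ‖z‖) ⁻¹' Set.Ioo a b := rfl

lemma isOpen_ann (a b : ℝ) : IsOpen {z : ℂ | a < ‖z‖ ∧ ‖z‖ < b} := by
  rw [ann_eq]; exact isOpen_Ioo.preimage continuous_norm

lemma isPreconnected_ann (a b : ℝ) (ha : 0 ≤ a) :
    IsPreconnected {z : ℂ | a < ‖z‖ ∧ ‖z‖ < b} := by
  have himg : {z : ℂ | a < ‖z‖ ∧ ‖z‖ < b}
      = (fun p : ℝ × ℝ => (p.1 : ℂ) * Complex.exp (p.2 * Complex.I)) ''
        (Set.Ioo a b ×ˢ Set.univ) := by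
    ext z
    constructor
    · rintro ⟨h1, h2⟩
      exact ⟨⟨‖z‖, Complex.arg z⟩, ⟨⟨h1, h2⟩, trivial⟩,
        Complex.norm_mul_exp_arg_mul_I z⟩
    · rintro ⟨⟨r, θ⟩, ⟨⟨h1, h2⟩, -⟩, rfl⟩
      have hr : 0 < r := lt_of_le_of_lt ha h1
      simp only [Set.mem_setOf_eq, norm_mul, Complex.norm_exp]
      simp [Complex.norm_real, Real.norm_eq_abs, abs_of_pos hr, h1, h2]
  rw [himg]
  apply IsPreconnected.image (isPreconnected_Ioo.prod isPreconnected_univ)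
  apply Continuous.continuousOn
  exact (Complex.continuous_ofReal.comp continuous_fst).mul
    ((Complex.continuous_ofReal.comp continuous_snd).mul continuous_const).cexp

/-- Properness: preimage of a compact subset under an open continuous bijection of an open
set is compact. -/
lemma compact_preimage {U : Set ℂ} (hUo : IsOpen U) {g : ℂ → ℂ}
    (hgb : Set.BijOn g U U)
    (hopen : ∀ V ⊆ U, IsOpen V → IsOpen (g '' V))
    {K : Set ℂ} (hK : IsCompact K) (hKU : K ⊆ U) :
    IsCompact (U ∩ g ⁻¹' K) := by
  rw [isCompact_iff_ultrafilter_le_nhds]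
  intro F hF
  have hF' : U ∩ g ⁻¹' K ∈ F := Filter.le_principal_iff.mp hF
  have hU_mem : U ∈ F := Filter.mem_of_superset hF' inter_subset_left
  have hKmem : K ∈ Filter.map g (F : Filter ℂ) := by
    apply Filter.mem_of_superset hF'
    intro z hz; exact hz.2
  obtain ⟨w, hwK, hw⟩ := hK.ultrafilter_le_nhds (Ultrafilter.map g F)
    (by simpa [Ultrafilter.coe_map] using hKmem)
  obtain ⟨ζ, hζU, hζw⟩ := hgb.surjOn (hKU hwK)
  refine ⟨ζ, ⟨hζU, by simp [hζw, hwK]⟩, ?_⟩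
  intro W hW
  obtain ⟨V, hVW, hVo, hζV⟩ := mem_nhds_iff.mp hW
  have hVUo : IsOpen (V ∩ U) := hVo.inter hUo
  have himg : IsOpen (g '' (V ∩ U)) := hopen _ inter_subset_right hVUo
  have hwim : w ∈ g '' (V ∩ U) := ⟨ζ, ⟨hζV, hζU⟩, hζw⟩
  have : g '' (V ∩ U) ∈ Filter.map g (F : Filter ℂ) := by
    have := hw (himg.mem_nhds hwim)
    simpa [Ultrafilter.coe_map] using this
  have hpre : g ⁻¹' (g '' (V ∩ U)) ∈ F := this
  apply Filter.mem_of_superset (Filter.inter_mem hU_mem hpre)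
  rintro z ⟨hzU, v, ⟨hvV, hvU⟩, hvz⟩
  have : z = v := hgb.injOn hzU hvU hvz.symm
  exact hVW (this ▸ hvV)

lemma stepB (s ε : ℝ) (hs0 : 0 < s) (hs1 : s < 1) (g gext : ℂ → ℂ)
    (hgc : ContinuousOn g (annE s)) (hgb : Set.BijOn g (annE s) (annE s))
    (hge : ContinuousOn gext (annE s ∪ Metric.sphere (0:ℂ) 1))
    (hgeg : ∀ z ∈ annE s, gext z = g z)
    (hmap : Set.MapsTo gext (Metric.sphere (0:ℂ) 1) (Metric.sphere (0:ℂ) 1))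
    (hopen : ∀ V ⊆ annE s, IsOpen V → IsOpen (g '' V))
    (hε0 : 0 < ε) (hε : ε ≤ (1 - s) / 2) :
    ∃ δ δ' : ℝ, 0 < δ ∧ 0 < δ' ∧ s + δ < 1 ∧ s < 1 - δ' ∧
      (∀ z ∈ annE s, ‖z‖ < s + δ → ‖g z‖ < s + ε) ∧
      (∀ z ∈ annE s, 1 - δ' < ‖z‖ → 1 - ε < ‖g z‖) := by
  have hEo : IsOpen (annE s) := isOpen_ann s 1
  have hse : s + ε ≤ 1 - ε := by linarith
  -- the compact "middle" target set
  set K : Set ℂ := {w : ℂ | s + ε ≤ ‖w‖ ∧ ‖w‖ ≤ 1 - ε} with hK_def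
  have hKclosed : IsClosed K := IsClosed.preimage continuous_norm isClosed_Icc
  have hKsub : K ⊆ Metric.closedBall 0 1 := by
    intro w hw
    simp only [Metric.mem_closedBall, Complex.dist_eq, sub_zero]
    calc ‖w‖ ≤ 1 - ε := hw.2
    _ ≤ 1 := by linarith
  have hKcomp : IsCompact K := (isCompact_closedBall (0:ℂ) 1).of_isClosed_subset hKclosed hKsub
  have hKU : K ⊆ annE s := fun w hw => ⟨by linarith [hw.1], by linarith [hw.2]⟩
  have hQ : IsCompact (annE s ∩ g ⁻¹' K) := compact_preimage hEo hgb hopen hKcomp hKU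
  -- get collar widths avoiding K
  have hcollar : ∃ δ δ' : ℝ, 0 < δ ∧ 0 < δ' ∧ s + δ < 1 ∧ s < 1 - δ' ∧
      ∀ z ∈ annE s, (‖z‖ < s + δ ∨ 1 - δ' < ‖z‖) → g z ∉ K := by
    rcases (annE s ∩ g ⁻¹' K).eq_empty_or_nonempty with hQe | hQne
    · refine ⟨(1-s)/2, (1-s)/2, by linarith, by linarith, by linarith, by linarith, ?_⟩
      intro z hz _ hgz
      have hmem : z ∈ annE s ∩ g ⁻¹' K := ⟨hz, hgz⟩
      rw [hQe] at hmem
      exact hmem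
    · obtain ⟨zm, hzmQ, hzm⟩ := hQ.exists_isMinOn hQne continuous_norm.continuousOn
      obtain ⟨zM, hzMQ, hzM⟩ := hQ.exists_isMaxOn hQne continuous_norm.continuousOn
      refine ⟨min (‖zm‖ - s) ((1-s)/2), min (1 - ‖zM‖) ((1-s)/2),
        lt_min (by linarith [hzmQ.1.1]) (by linarith),
        lt_min (by linarith [hzMQ.1.2]) (by linarith), ?_, ?_, ?_⟩
      · have := min_le_right (‖zm‖ - s) ((1-s)/2); linarith
      · have := min_le_right (1 - ‖zM‖) ((1-s)/2); linarith
      · intro z hz hlt hgz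
        have hzQ : z ∈ annE s ∩ g ⁻¹' K := ⟨hz, hgz⟩
        rcases hlt with h | h
        · have h1 := hzm hzQ
          have h2 := min_le_left (‖zm‖ - s) ((1-s)/2)
          simp only [IsMinOn, IsMinFilter] at h1
          have : ‖zm‖ ≤ ‖z‖ := h1
          linarith
        · have h1 : ‖z‖ ≤ ‖zM‖ := hzM hzQ
          have h2 := min_le_left (1 - ‖zM‖) ((1-s)/2)
          linarith
  obtain ⟨δ, δ', hδ0, hδ'0, hδ1, hδ'1, havoid⟩ := hcollar
  -- dichotomy sets
  set U' : Set ℂ := {w : ℂ | ‖w‖ < s + ε} with hU'_def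
  set V' : Set ℂ := {w : ℂ | 1 - ε < ‖w‖} with hV'_def
  have hU'o : IsOpen U' := isOpen_Iio.preimage continuous_norm
  have hV'o : IsOpen V' := isOpen_Ioi.preimage continuous_norm
  have hdisj : Disjoint U' V' := by
    rw [Set.disjoint_left]
    intro w hw1 hw2
    simp only [hU'_def, hV'_def, Set.mem_setOf_eq] at hw1 hw2
    linarith
  have hcover : ∀ z ∈ annE s, (‖z‖ < s + δ ∨ 1 - δ' < ‖z‖) →
      g z ∈ U' ∪ V' := by
    intro z hz h
    have := havoid z hz h
    simp only [hK_def, Set.mem_setOf_eq, not_and_or, not_le] at this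
    rcases this with h | h
    · exact Or.inl h
    · exact Or.inr h
  -- outer collar
  set C' : Set ℂ := {z : ℂ | 1 - δ' < ‖z‖ ∧ ‖z‖ < 1} with hC'_def
  have hC'E : C' ⊆ annE s := fun z hz => ⟨lt_of_lt_of_le hδ'1 (le_of_lt hz.1), hz.2⟩
  have hC'conn : IsPreconnected (g '' C') :=
    (isPreconnected_ann (1-δ') 1 (by linarith)).image g (hgc.mono hC'E)
  have hC'cover : g '' C' ⊆ U' ∪ V' := by
    rintro w ⟨z, hz, rfl⟩
    exact hcover z (hC'E hz) (Or.inr hz.1)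
  have houterV : g '' C' ⊆ V' := by
    rcases hC'conn.subset_or_subset hU'o hV'o hdisj hC'cover with hsub | hsub
    · -- contradiction via gext at the point 1 on the sphere
      exfalso
      have h1s : (1:ℂ) ∈ Metric.sphere (0:ℂ) 1 := by simp
      have hcw : ContinuousWithinAt gext (annE s ∪ Metric.sphere (0:ℂ) 1) 1 :=
        hge 1 (Or.inr h1s)
      have hφ : Filter.Tendsto (fun t : ℝ => (t : ℂ)) (nhdsWithin 1 (Set.Iio 1)) (nhds 1) := by
        have := Complex.continuous_ofReal.tendsto (1:ℝ)
        exact (this.mono_left nhdsWithin_le_nhds).congr (by simp)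
      have hmem : ∀ᶠ t : ℝ in nhdsWithin 1 (Set.Iio 1),
          (t:ℂ) ∈ C' ∩ annE s := by
        have h1 : Set.Ioo (max s (1 - δ')) 1 ∈ nhdsWithin (1:ℝ) (Set.Iio 1) := by
          apply mem_nhdsWithin.mpr
          refine ⟨Set.Ioi (max s (1 - δ')), isOpen_Ioi, by rw [Set.mem_Ioi]; exact max_lt hs1 (by linarith), ?_⟩
          rintro t ⟨ht1, ht2⟩
          exact ⟨ht1, ht2⟩
        filter_upwards [h1] with t ht
        have habs : ‖(t:ℂ)‖ = t := by
          rw [Complex.norm_real, Real.norm_eq_abs, abs_of_pos (by rcases ht with ⟨h,_⟩; have := le_max_left s (1-δ'); nlinarith [hs0])]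
        constructor
        · exact ⟨by rw [habs]; exact lt_of_le_of_lt (le_max_right _ _) ht.1, by rw [habs]; exact ht.2⟩
        · exact ⟨by rw [habs]; exact lt_of_le_of_lt (le_max_left _ _) ht.1, by rw [habs]; exact ht.2⟩
      have hφ' : Filter.Tendsto (fun t : ℝ => (t : ℂ)) (nhdsWithin 1 (Set.Iio 1))
          (nhdsWithin 1 (annE s ∪ Metric.sphere (0:ℂ) 1)) := by
        apply Filter.Tendsto.mono_right (tendsto_nhdsWithin_of_tendsto_nhds_of_eventually_within _ hφ _) le_rfl
        filter_upwards [hmem] with t ht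
        exact Or.inl ht.2
      have hlim : Filter.Tendsto (fun t : ℝ => gext ((t:ℂ))) (nhdsWithin 1 (Set.Iio 1))
          (nhds (gext 1)) := hcw.tendsto.comp hφ'
      have hlimabs : Filter.Tendsto (fun t : ℝ => ‖gext ((t:ℂ))‖)
          (nhdsWithin 1 (Set.Iio 1)) (nhds (‖gext 1‖)) :=
        (continuous_norm.tendsto _).comp hlim
      have hbound : ∀ᶠ t : ℝ in nhdsWithin 1 (Set.Iio 1),
          ‖gext ((t:ℂ))‖ ≤ s + ε := by
        filter_upwards [hmem] with t ht
        rw [hgeg _ ht.2]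
        exact le_of_lt (hsub ⟨_, ht.1, rfl⟩)
      have hle : ‖gext 1‖ ≤ s + ε := by
        apply le_of_tendsto hlimabs hbound
      have : ‖gext 1‖ = 1 := by
        have := hmap h1s
        simpa [Complex.dist_eq] using this
      linarith
    · exact hsub
  -- inner collar
  set C : Set ℂ := {z : ℂ | s < ‖z‖ ∧ ‖z‖ < s + δ} with hC_def
  have hCE : C ⊆ annE s := fun z hz => ⟨hz.1, lt_trans hz.2 hδ1⟩
  have hCconn : IsPreconnected (g '' C) :=
    (isPreconnected_ann s (s+δ) (le_of_lt hs0)).image g (hgc.mono hCE)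
  have hCcover : g '' C ⊆ U' ∪ V' := by
    rintro w ⟨z, hz, rfl⟩
    exact hcover z (hCE hz) (Or.inl hz.2)
  have hinnerU : g '' C ⊆ U' := by
    rcases hCconn.subset_or_subset hU'o hV'o hdisj hCcover with hsub | hsub
    · exact hsub
    · exfalso
      set T : Set ℂ := {w : ℂ | s < ‖w‖ ∧ ‖w‖ < s + ε} with hT_def
      set M : Set ℂ := {z : ℂ | s + δ ≤ ‖z‖ ∧ ‖z‖ ≤ 1 - δ'} with hM_def
      have hMcomp : IsCompact M := by
        apply (isCompact_closedBall (0:ℂ) 1).of_isClosed_subset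
          (IsClosed.preimage continuous_norm isClosed_Icc)
        intro z hz
        simp only [Metric.mem_closedBall, Complex.dist_eq, sub_zero]
        linarith [hz.2]
      have hME : M ⊆ annE s := fun z hz => ⟨by linarith [hz.1], by linarith [hz.2]⟩
      have hTM : T ⊆ g '' M := by
        intro w hw
        have hwE : w ∈ annE s := ⟨hw.1, by linarith [hw.2]⟩
        obtain ⟨z, hzE, rfl⟩ := hgb.surjOn hwE
        refine ⟨z, ?_, rfl⟩
        have hznC : z ∉ C := by
          intro hzC
          have := hsub ⟨z, hzC, rfl⟩
          simp only [hV'_def, Set.mem_setOf_eq] at this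
          linarith [hw.2]
        have hznC' : z ∉ C' := by
          intro hzC'
          have := houterV ⟨z, hzC', rfl⟩
          simp only [hV'_def, Set.mem_setOf_eq] at this
          linarith [hw.2]
        constructor
        · by_contra h
          push_neg at h
          exact hznC ⟨hzE.1, h⟩
        · by_contra h
          push_neg at h
          exact hznC' ⟨h, hzE.2⟩
      have hgMcomp : IsCompact (g '' M) := hMcomp.image_of_continuousOn (hgc.mono hME)
      have hclT : closure T ⊆ g '' M := closure_minimal hTM hgMcomp.isClosed
      have hsT : (s:ℂ) ∈ closure T := by
        have htend : Filter.Tendsto (fun t : ℝ => ((s + t : ℝ) : ℂ)) (nhdsWithin 0 (Set.Ioi 0))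
            (nhds (s:ℂ)) := by
          have : Filter.Tendsto (fun t : ℝ => s + t) (nhdsWithin 0 (Set.Ioi 0)) (nhds s) := by
            have h := ((continuous_const (y := s)).add continuous_id).tendsto (0:ℝ)
            replace h : Filter.Tendsto (fun t : ℝ => s + t) (nhds 0) (nhds s) := by simpa [Pi.add_def] using h
            exact h.mono_left nhdsWithin_le_nhds
          exact (Complex.continuous_ofReal.tendsto s).comp this
        apply mem_closure_of_tendsto htend
        filter_upwards [Ioo_mem_nhdsGT_of_mem (Set.left_mem_Ico.mpr hε0)] with t ht
        have habs : ‖((s + t : ℝ):ℂ)‖ = s + t := by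
          rw [Complex.norm_real, Real.norm_eq_abs, abs_of_pos (by linarith [ht.1])]
        exact ⟨by rw [habs]; linarith [ht.1], by rw [habs]; linarith [ht.2]⟩
      have hsM : (s:ℂ) ∈ g '' M := hclT hsT
      obtain ⟨z, hzM, hgz⟩ := hsM
      have : g z ∈ annE s := hgb.mapsTo (hME hzM)
      rw [hgz] at this
      simp only [annE, Set.mem_setOf_eq] at this
      have habs : ‖((s:ℝ):ℂ)‖ = s := by
        rw [Complex.norm_real, Real.norm_eq_abs, abs_of_pos hs0]
      rw [habs] at this
      exact lt_irrefl s this.1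
  refine ⟨δ, δ', hδ0, hδ'0, hδ1, hδ'1, ?_, ?_⟩
  · intro z hz hlt
    exact hinnerU ⟨z, ⟨hz.1, hlt⟩, rfl⟩
  · intro z hz hlt
    exact houterV ⟨z, ⟨hlt, hz.2⟩, rfl⟩

/-- Maximum-modulus estimate on a closed sub-annulus, two-sided. -/
lemma annulus_bound (s : ℝ) (hs0 : 0 < s) (g : ℂ → ℂ)
    (hgd : DifferentiableOn ℂ g (annE s))
    (hgmap : Set.MapsTo g (annE s) (annE s))
    (r₁ r₂ B : ℝ) (hr₁ : s < r₁) (hr₂ : r₂ < 1) (hr : r₁ < r₂)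
    (hb : ∀ z : ℂ, ‖z‖ = r₁ ∨ ‖z‖ = r₂ →
      ‖g z / z‖ ≤ B ∧ ‖z / g z‖ ≤ B)
    (z0 : ℂ) (h1 : r₁ < ‖z0‖) (h2 : ‖z0‖ < r₂) :
    ‖g z0 / z0‖ ≤ B ∧ ‖z0 / g z0‖ ≤ B := by
  have hgc := hgd.continuousOn
  have hEne : ∀ z ∈ annE s, z ≠ 0 := by
    intro z hz h
    rw [h] at hz
    simp only [annE, Set.mem_setOf_eq, norm_zero] at hz
    linarith [hz.1]
  have hgne : ∀ z ∈ annE s, g z ≠ 0 := by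
    intro z hz h
    have h2 := (hgmap hz).1
    rw [h] at h2
    simp only [norm_zero] at h2
    linarith
  have hAo : IsOpen {z : ℂ | r₁ < ‖z‖ ∧ ‖z‖ < r₂} := isOpen_ann r₁ r₂
  set A := {z : ℂ | r₁ < ‖z‖ ∧ ‖z‖ < r₂} with hA_def
  have hz0A : z0 ∈ A := ⟨h1, h2⟩
  have hclA : closure A ⊆ {z : ℂ | r₁ ≤ ‖z‖ ∧ ‖z‖ ≤ r₂} :=
    closure_minimal (fun z hz => ⟨le_of_lt hz.1, le_of_lt hz.2⟩)
      (IsClosed.preimage continuous_norm isClosed_Icc)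
  have hclAE : closure A ⊆ annE s := fun z hz =>
    ⟨lt_of_lt_of_le hr₁ (hclA hz).1, lt_of_le_of_lt (hclA hz).2 hr₂⟩
  have hAE : A ⊆ annE s := subset_trans subset_closure hclAE
  have hfront : ∀ z ∈ frontier A, ‖z‖ = r₁ ∨ ‖z‖ = r₂ := by
    intro z hz
    have hcl : z ∈ closure A := hz.1
    have hni : z ∉ A := fun hmem => hz.2 (by rwa [hAo.interior_eq])
    have h3 := hclA hcl
    simp only [hA_def, Set.mem_setOf_eq, not_and_or, not_lt] at hni
    rcases hni with h | h
    · exact Or.inl (le_antisymm h h3.1)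
    · exact Or.inr (le_antisymm h3.2 h)
  have hAbd : Bornology.IsBounded A := by
    have hsub : A ⊆ Metric.ball (0:ℂ) 2 := by
      intro z hz
      simp only [Metric.mem_ball, Complex.dist_eq, sub_zero]
      calc ‖z‖ < r₂ := hz.2
      _ < 2 := by linarith
    exact Metric.isBounded_ball.subset hsub
  constructor
  · have hdc : DiffContOnCl ℂ (fun z => g z / z) A :=
      ⟨(hgd.mono hAE).div differentiableOn_id (fun z hz => hEne z (hAE hz)),
       (hgc.mono hclAE).div continuousOn_id (fun z hz => hEne z (hclAE hz))⟩
    have := Complex.norm_le_of_forall_mem_frontier_norm_le hAbd hdc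
      (fun z hz => by exact (hb z (hfront z hz)).1)
      (subset_closure hz0A)
    exact this
  · have hdc : DiffContOnCl ℂ (fun z => z / g z) A :=
      ⟨differentiableOn_id.div (hgd.mono hAE) (fun z hz => hgne z (hAE hz)),
       continuousOn_id.div (hgc.mono hclAE) (fun z hz => hgne z (hclAE hz))⟩
    have := Complex.norm_le_of_forall_mem_frontier_norm_le hAbd hdc
      (fun z hz => by exact (hb z (hfront z hz)).2)
      (subset_closure hz0A)
    exact this

set_option maxHeartbeats 1000000 in
lemma modOne (s : ℝ) (hs0 : 0 < s) (hs1 : s < 1) (g gext : ℂ → ℂ)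
    (hgd : DifferentiableOn ℂ g (annE s)) (hgb : Set.BijOn g (annE s) (annE s))
    (hge : ContinuousOn gext (annE s ∪ Metric.sphere (0:ℂ) 1))
    (hgeg : ∀ z ∈ annE s, gext z = g z)
    (hmap : Set.MapsTo gext (Metric.sphere (0:ℂ) 1) (Metric.sphere (0:ℂ) 1))
    (hopen : ∀ V ⊆ annE s, IsOpen V → IsOpen (g '' V)) :
    ∀ z0 ∈ annE s, ‖g z0 / z0‖ = 1 := by
  intro z0 hz0
  have hgc : ContinuousOn g (annE s) := hgd.continuousOn
  obtain ⟨hsa, ha1⟩ := hz0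
  have hz0ne : z0 ≠ 0 := by
    intro h
    rw [h, norm_zero] at hsa
    linarith
  have hgz0 : g z0 ∈ annE s := hgb.mapsTo ⟨hsa, ha1⟩
  have hgz0ne : g z0 ≠ 0 := by
    intro h
    have := hgz0.1
    rw [h, norm_zero] at this
    linarith
  have ht0 : 0 < ‖g z0 / z0‖ := by
    rw [norm_div]
    exact div_pos (norm_pos_iff.mpr hgz0ne) (norm_pos_iff.mpr hz0ne)
  have hC0 : (0:ℝ) < 1/s + 2 := by positivity
  have hε00 : (0:ℝ) < min ((1-s)/2) (1/2) := lt_min (by linarith) (by norm_num)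
  have key : ∀ ε : ℝ, 0 < ε → ε ≤ min ((1-s)/2) (1/2) →
      ‖g z0 / z0‖ ≤ 1 + ε * (1/s + 2) ∧
      1 - ε * (1/s + 2) ≤ ‖g z0 / z0‖ := by
    intro ε hε1 hε2
    have hεa : ε ≤ (1-s)/2 := le_trans hε2 (min_le_left _ _)
    have hεb : ε ≤ 1/2 := le_trans hε2 (min_le_right _ _)
    obtain ⟨δ, δ', hδ0, hδ'0, hδ1, hδ'1, hinner, houter⟩ :=
      stepB s ε hs0 hs1 g gext hgc hgb hge hgeg hmap hopen hε1 hεa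
    -- choose the radii
    obtain ⟨r₁, hr₁s, hr₁a, hr₁δ, hr₁ε⟩ :
        ∃ r₁ : ℝ, s < r₁ ∧ r₁ < ‖z0‖ ∧ r₁ < s + δ ∧ r₁ ≤ s + ε := by
      refine ⟨s + min δ (min ε (‖z0‖ - s)) / 2, ?_, ?_, ?_, ?_⟩
      · have := lt_min hδ0 (lt_min hε1 (by linarith : (0:ℝ) < ‖z0‖ - s))
        linarith
      · have h1 : min δ (min ε (‖z0‖ - s)) ≤ ‖z0‖ - s :=
          le_trans (min_le_right _ _) (min_le_right _ _)
        have := lt_min hδ0 (lt_min hε1 (by linarith : (0:ℝ) < ‖z0‖ - s))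
        linarith
      · have h1 : min δ (min ε (‖z0‖ - s)) ≤ δ := min_le_left _ _
        have := lt_min hδ0 (lt_min hε1 (by linarith : (0:ℝ) < ‖z0‖ - s))
        linarith
      · have h1 : min δ (min ε (‖z0‖ - s)) ≤ ε :=
          le_trans (min_le_right _ _) (min_le_left _ _)
        linarith
    obtain ⟨r₂, hr₂1, hr₂a, hr₂δ, hr₂ε⟩ :
        ∃ r₂ : ℝ, r₂ < 1 ∧ ‖z0‖ < r₂ ∧ 1 - δ' < r₂ ∧ 1 - ε ≤ r₂ := by
      refine ⟨1 - min δ' (min ε (1 - ‖z0‖)) / 2, ?_, ?_, ?_, ?_⟩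
      · have := lt_min hδ'0 (lt_min hε1 (by linarith : (0:ℝ) < 1 - ‖z0‖))
        linarith
      · have h1 : min δ' (min ε (1 - ‖z0‖)) ≤ 1 - ‖z0‖ :=
          le_trans (min_le_right _ _) (min_le_right _ _)
        have := lt_min hδ'0 (lt_min hε1 (by linarith : (0:ℝ) < 1 - ‖z0‖))
        linarith
      · have h1 : min δ' (min ε (1 - ‖z0‖)) ≤ δ' := min_le_left _ _
        have := lt_min hδ'0 (lt_min hε1 (by linarith : (0:ℝ) < 1 - ‖z0‖))
        linarith
      · have h1 : min δ' (min ε (1 - ‖z0‖)) ≤ ε :=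
          le_trans (min_le_right _ _) (min_le_left _ _)
        linarith
    have hε1' : (0:ℝ) < 1 - ε := by linarith
    -- frontier bounds
    have hb : ∀ z : ℂ, ‖z‖ = r₁ ∨ ‖z‖ = r₂ →
        ‖g z / z‖ ≤ max ((s+ε)/s) (1/(1-ε)) ∧
        ‖z / g z‖ ≤ max ((s+ε)/s) (1/(1-ε)) := by
      intro z hz
      have hzE : z ∈ annE s := by
        rcases hz with h | h
        · exact ⟨by rw [h]; exact hr₁s, by rw [h]; linarith⟩
        · exact ⟨by rw [h]; linarith, by rw [h]; exact hr₂1⟩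
      have hgzE : g z ∈ annE s := hgb.mapsTo hzE
      have hgzpos : 0 < ‖g z‖ := lt_trans hs0 hgzE.1
      have hzpos : 0 < ‖z‖ := lt_trans hs0 hzE.1
      rw [norm_div, norm_div]
      rcases hz with h | h
      · have hlt : ‖g z‖ < s + ε := hinner z hzE (by rw [h]; linarith)
        constructor
        · refine le_trans ?_ (le_max_left _ _)
          rw [div_le_div_iff₀ hzpos hs0, h]
          nlinarith [hgzE.1, hzE.1]
        · refine le_trans ?_ (le_max_left _ _)
          rw [div_le_div_iff₀ hgzpos hs0, h]
          nlinarith [hgzE.1]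
      · have hlt : 1 - ε < ‖g z‖ := houter z hzE (by rw [h]; linarith)
        constructor
        · refine le_trans ?_ (le_max_right _ _)
          rw [div_le_div_iff₀ hzpos hε1', h]
          nlinarith [hgzE.2]
        · refine le_trans ?_ (le_max_right _ _)
          rw [div_le_div_iff₀ hgzpos hε1', h]
          nlinarith [hzE.2]
    obtain ⟨hmax_h, hmax_k⟩ := annulus_bound s hs0 g hgd hgb.mapsTo r₁ r₂
      (max ((s+ε)/s) (1/(1-ε))) hr₁s hr₂1 (by linarith) hb z0 hr₁a hr₂a
    have hBle : max ((s+ε)/s) (1/(1-ε)) ≤ 1 + ε * (1/s + 2) := by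
      apply max_le
      · rw [div_le_iff₀ hs0]
        have hsne : s ≠ 0 := hs0.ne'
        have e1 : (1 + ε * (1/s + 2)) * s = s + ε + 2*ε*s := by field_simp; ring
        have e2 : 0 ≤ ε * s := mul_nonneg hε1.le hs0.le
        linarith
      · rw [div_le_iff₀ hε1']
        have e1 : (1 + ε * (1/s + 2)) * (1 - ε) - 1 = ε * ((1/s + 1) - ε * (1/s + 2)) := by ring
        have e3 : ε * (1/s + 2) ≤ (1/2) * (1/s + 2) :=
          mul_le_mul_of_nonneg_right hεb (by positivity)
        have e4 : (1/2) * (1/s + 2) ≤ (1/s + 1) := by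
          have : (0:ℝ) < 1/s := by positivity
          linarith
        have e5 : 0 ≤ ε * ((1/s + 1) - ε * (1/s + 2)) :=
          mul_nonneg hε1.le (by linarith)
        linarith
    have htinv : ‖z0 / g z0‖ = (‖g z0 / z0‖)⁻¹ := by
      rw [norm_div, norm_div, ← one_div, one_div_div]
    refine ⟨le_trans hmax_h hBle, ?_⟩
    have h1 : (‖g z0 / z0‖)⁻¹ ≤ 1 + ε * (1/s + 2) := by
      rw [← htinv]; exact le_trans hmax_k hBle
    have h2 : 1 ≤ ‖g z0 / z0‖ * (1 + ε * (1/s + 2)) := by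
      rw [inv_le_iff_one_le_mul₀' ht0] at h1
      linarith
    rcases le_or_gt (‖g z0 / z0‖) 1 with hc | hc
    · have e1 : ‖g z0 / z0‖ * (ε * (1/s + 2)) ≤ 1 * (ε * (1/s + 2)) :=
        mul_le_mul_of_nonneg_right hc (mul_nonneg hε1.le hC0.le)
      nlinarith
    · nlinarith [mul_pos hε1 hC0]
  -- conclude
  have hle : ‖g z0 / z0‖ ≤ 1 := by
    apply le_of_forall_pos_le_add
    intro η hη
    obtain ⟨h1, _⟩ := key (min (min ((1-s)/2) (1/2)) (η/(1/s + 2)))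
      (lt_min hε00 (div_pos hη hC0)) (min_le_left _ _)
    have h3 : min (min ((1-s)/2) (1/2)) (η/(1/s + 2)) * (1/s + 2) ≤ η := by
      rw [← le_div_iff₀ hC0]
      exact min_le_right _ _
    linarith
  have hge' : 1 ≤ ‖g z0 / z0‖ := by
    by_contra hcon
    push_neg at hcon
    have hη : 0 < 1 - ‖g z0 / z0‖ := by linarith
    obtain ⟨_, h2⟩ := key (min (min ((1-s)/2) (1/2)) ((1 - ‖g z0 / z0‖)/(2*(1/s + 2))))
      (lt_min hε00 (div_pos hη (by positivity))) (min_le_left _ _)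
    have h3 : min (min ((1-s)/2) (1/2)) ((1 - ‖g z0 / z0‖)/(2*(1/s + 2))) * (1/s + 2)
        ≤ (1 - ‖g z0 / z0‖)/2 := by
      rw [← le_div_iff₀ hC0]
      have he : (1 - ‖g z0 / z0‖)/(2*(1/s + 2))
          = (1 - ‖g z0 / z0‖)/2/(1/s + 2) := (div_div _ 2 _).symm
      rw [← he]
      exact min_le_right _ _
    linarith
  linarith

lemma gRotation (s : ℝ) (hs0 : 0 < s) (hs1 : s < 1) (g gext : ℂ → ℂ)
    (hgd : DifferentiableOn ℂ g (annE s)) (hgb : Set.BijOn g (annE s) (annE s))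
    (hge : ContinuousOn gext (annE s ∪ Metric.sphere (0:ℂ) 1))
    (hgeg : ∀ z ∈ annE s, gext z = g z)
    (hmap : Set.MapsTo gext (Metric.sphere (0:ℂ) 1) (Metric.sphere (0:ℂ) 1)) :
    ∃ c : ℂ, ‖c‖ = 1 ∧ ∀ z ∈ annE s, g z = c * z := by
  have hEo : IsOpen (annE s) := isOpen_ann s 1
  have hEconn : IsPreconnected (annE s) := isPreconnected_ann s 1 hs0.le
  have hEne : ∀ z ∈ annE s, z ≠ 0 := by
    intro z hz h
    subst h
    have := hz.1
    simp only [norm_zero] at this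
    linarith
  -- a base point
  have hz1 : (((s+1)/2 : ℝ) : ℂ) ∈ annE s := by
    constructor <;> rw [Complex.norm_real, Real.norm_eq_abs, abs_of_pos (by linarith)] <;> linarith
  -- open mapping
  have hga : AnalyticOnNhd ℂ g (annE s) := hgd.analyticOnNhd hEo
  have hopen : ∀ V ⊆ annE s, IsOpen V → IsOpen (g '' V) := by
    rcases hga.is_constant_or_isOpen hEconn with ⟨v, hv⟩ | hopen
    · exfalso
      have hz2 : (-(((s+1)/2 : ℝ) : ℂ)) ∈ annE s := by
        constructor <;> rw [norm_neg, Complex.norm_real, Real.norm_eq_abs, abs_of_pos (by linarith)] <;> linarith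
      have heq : (((s+1)/2 : ℝ) : ℂ) = -(((s+1)/2 : ℝ) : ℂ) :=
        hgb.injOn hz1 hz2 (by rw [hv _ hz1, hv _ hz2])
      have : (((s+1)/2 : ℝ) : ℂ) = 0 := by
        have := heq
        apply_fun (· + (((s+1)/2 : ℝ) : ℂ)) at this
        simp at this
        simpa [two_mul] using this
      exact hEne _ hz1 this
    · exact hopen
  have habs : ∀ z0 ∈ annE s, ‖g z0 / z0‖ = 1 :=
    modOne s hs0 hs1 g gext hgd hgb hge hgeg hmap hopen
  have hdiff_h : DifferentiableOn ℂ (fun z => g z / z) (annE s) :=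
    hgd.div differentiableOn_id hEne
  have hmax : IsMaxOn (norm ∘ (fun z => g z / z)) (annE s) (((s+1)/2 : ℝ) : ℂ) := by
    intro x hx
    simp only [Set.mem_setOf_eq, Function.comp_apply]
    rw [habs x hx, habs _ hz1]
  have hconst := Complex.eqOn_of_isPreconnected_of_isMaxOn_norm hEconn hEo hdiff_h hz1 hmax
  refine ⟨g (((s+1)/2 : ℝ) : ℂ) / (((s+1)/2 : ℝ) : ℂ), habs _ hz1, ?_⟩
  intro z hz
  have h1 := hconst hz
  simp only [Function.const_apply] at h1
  rw [div_eq_iff (hEne z hz)] at h1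
  rw [h1]

lemma gext_eq (s : ℝ) (hs0 : 0 < s) (hs1 : s < 1) (g gext : ℂ → ℂ) (c : ℂ)
    (hge : ContinuousOn gext (annE s ∪ Metric.sphere (0:ℂ) 1))
    (hgeg : ∀ z ∈ annE s, gext z = g z)
    (hrot : ∀ z ∈ annE s, g z = c * z) :
    ∀ p ∈ Metric.sphere (0:ℂ) 1, gext p = c * p := by
  intro p hp
  have hpabs : ‖p‖ = 1 := by simpa [Complex.dist_eq] using hp
  have hcw : ContinuousWithinAt gext (annE s ∪ Metric.sphere (0:ℂ) 1) p :=
    hge p (Or.inr hp)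
  have hφ : Filter.Tendsto (fun t : ℝ => (t : ℂ) * p) (nhdsWithin 1 (Set.Iio 1)) (nhds p) := by
    have h1 : Continuous (fun t : ℝ => (t : ℂ) * p) :=
      (Complex.continuous_ofReal.mul continuous_const)
    have h2 := h1.tendsto (1:ℝ)
    simp only [Complex.ofReal_one, one_mul] at h2
    exact h2.mono_left nhdsWithin_le_nhds
  have hmem : ∀ᶠ t : ℝ in nhdsWithin 1 (Set.Iio 1), (t:ℂ) * p ∈ annE s := by
    have h1 : Set.Ioo s 1 ∈ nhdsWithin (1:ℝ) (Set.Iio 1) := by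
      apply mem_nhdsWithin.mpr
      exact ⟨Set.Ioi s, isOpen_Ioi, hs1, fun t ht => ⟨ht.1, ht.2⟩⟩
    filter_upwards [h1] with t ht
    have : ‖(t:ℂ) * p‖ = t := by
      rw [norm_mul, hpabs, mul_one, Complex.norm_real, Real.norm_eq_abs, abs_of_pos (by linarith [ht.1])]
    exact ⟨by rw [this]; exact ht.1, by rw [this]; exact ht.2⟩
  have hφ' : Filter.Tendsto (fun t : ℝ => (t : ℂ) * p) (nhdsWithin 1 (Set.Iio 1))
      (nhdsWithin p (annE s ∪ Metric.sphere (0:ℂ) 1)) := by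
    apply tendsto_nhdsWithin_of_tendsto_nhds_of_eventually_within _ hφ
    filter_upwards [hmem] with t ht
    exact Or.inl ht
  have hlim1 : Filter.Tendsto (fun t : ℝ => gext ((t:ℂ) * p)) (nhdsWithin 1 (Set.Iio 1))
      (nhds (gext p)) := hcw.tendsto.comp hφ'
  have hlim2 : Filter.Tendsto (fun t : ℝ => gext ((t:ℂ) * p)) (nhdsWithin 1 (Set.Iio 1))
      (nhds (c * p)) := by
    have h1 : Filter.Tendsto (fun t : ℝ => c * ((t:ℂ) * p)) (nhdsWithin 1 (Set.Iio 1))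
        (nhds (c * p)) := (continuous_const.mul continuous_id).tendsto p |>.comp hφ
    apply h1.congr'
    filter_upwards [hmem] with t ht
    rw [hgeg _ ht, hrot _ ht]
  exact tendsto_nhds_unique hlim1 hlim2

end Stmt10Aux

/-- A conformal homeomorphism `g` of `E = {s < |z| < 1}` onto itself sending the unit-circle
boundary component to the unit-circle boundary component (as witnessed by a continuous
extension `gext`) extends by Schwarz reflection across the unit circle to a conformal
homeomorphism `G` of `{s < |z| < 1/s}` onto itself, and the induced boundary map on the
unit circle extends to a `K`-quasiconformal homeomorphism of the closed unit disc, with `K`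
depending only on `s`. -/
theorem stmt10 (s : ℝ) (hs0 : 0 < s) (hs1 : s < 1) :
    ∃ K : ℝ, 1 ≤ K ∧
      ∀ g gext : ℂ → ℂ,
        DifferentiableOn ℂ g (annE s) → Set.BijOn g (annE s) (annE s) →
        ContinuousOn gext (annE s ∪ Metric.sphere (0 : ℂ) 1) →
        (∀ z ∈ annE s, gext z = g z) →
        Set.MapsTo gext (Metric.sphere (0 : ℂ) 1) (Metric.sphere (0 : ℂ) 1) →
        Set.SurjOn gext (Metric.sphere (0 : ℂ) 1) (Metric.sphere (0 : ℂ) 1) →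
        -- Schwarz reflection extension
        (∃ G : ℂ → ℂ, DifferentiableOn ℂ G (annDoubled s) ∧
          Set.BijOn G (annDoubled s) (annDoubled s) ∧
          (∀ z ∈ annE s, G z = g z) ∧
          (∀ z ∈ Metric.sphere (0 : ℂ) 1, G z = gext z) ∧
          (∀ z ∈ annDoubled s, G (((starRingEnd ℂ) z)⁻¹) = ((starRingEnd ℂ) (G z))⁻¹)) ∧
        -- K-quasiconformal extension of the boundary circle map to the closed disc
        (∃ F : ℂ → ℂ, ContinuousOn F (Metric.closedBall (0 : ℂ) 1) ∧
          Set.BijOn F (Metric.closedBall (0 : ℂ) 1) (Metric.closedBall (0 : ℂ) 1) ∧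
          (∀ z ∈ Metric.sphere (0 : ℂ) 1, F z = gext z) ∧
          QuasiconformalOn K F (Metric.ball (0 : ℂ) 1)) := by
  refine ⟨1, le_refl 1, ?_⟩
  intro g gext hgd hgb hge hgeg hmap _hsurj
  obtain ⟨c, hc, hrot⟩ := gRotation s hs0 hs1 g gext hgd hgb hge hgeg hmap
  have hcne : c ≠ 0 := by
    intro h
    rw [h, norm_zero] at hc
    norm_num at hc
  have hcinv : ‖c⁻¹‖ = 1 := by rw [norm_inv, hc]; norm_num
  have hgext : ∀ p ∈ Metric.sphere (0:ℂ) 1, gext p = c * p :=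
    gext_eq s hs0 hs1 g gext c hge hgeg hrot
  constructor
  · -- the Schwarz reflection extension
    refine ⟨fun z => c * z, ?_, ?_, ?_, ?_, ?_⟩
    · exact (differentiable_id.const_mul c).differentiableOn
    · refine ⟨?_, ?_, ?_⟩
      · intro z hz
        refine ⟨?_, ?_⟩ <;> rw [norm_mul, hc, one_mul]
        exacts [hz.1, hz.2]
      · intro z _ w _ h
        exact mul_left_cancel₀ hcne h
      · intro w hw
        refine ⟨c⁻¹ * w, ⟨?_, ?_⟩, ?_⟩
        · rw [norm_mul, hcinv, one_mul]; exact hw.1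
        · rw [norm_mul, hcinv, one_mul]; exact hw.2
        · simp only
          rw [← mul_assoc, mul_inv_cancel₀ hcne, one_mul]
    · intro z hz; exact (hrot z hz).symm
    · intro z hz; exact (hgext z hz).symm
    · intro z _
      have h1 : (starRingEnd ℂ) c * c = 1 := by
        rw [mul_comm, Complex.mul_conj, ← Complex.sq_norm, hc]
        norm_num
      have h2 : c = ((starRingEnd ℂ) c)⁻¹ := eq_inv_of_mul_eq_one_left (by rw [mul_comm]; exact h1)
      simp only [map_mul, mul_inv]
      rw [← h2]
  · -- the quasiconformal extension
    refine ⟨fun z => c * z, (continuous_const.mul continuous_id).continuousOn, ?_, ?_, ?_⟩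
    · refine ⟨?_, ?_, ?_⟩
      · intro z hz
        simp only [Metric.mem_closedBall, Complex.dist_eq, sub_zero] at hz ⊢
        rw [norm_mul, hc, one_mul]; exact hz
      · intro z _ w _ h
        exact mul_left_cancel₀ hcne h
      · intro w hw
        simp only [Metric.mem_closedBall, Complex.dist_eq, sub_zero] at hw
        refine ⟨c⁻¹ * w, ?_, ?_⟩
        · simp only [Metric.mem_closedBall, Complex.dist_eq, sub_zero, norm_mul, hcinv, one_mul]
          exact hw
        · simp only
          rw [← mul_assoc, mul_inv_cancel₀ hcne, one_mul]
    · intro z hz; exact (hgext z hz).symm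
    · refine ⟨0, le_refl 0, by norm_num, by norm_num, ?_⟩
      apply Filter.Eventually.of_forall
      intro z
      refine ⟨c • ContinuousLinearMap.id ℝ ℂ, ?_, ?_⟩
      · have h := (hasFDerivAt_id (𝕜 := ℝ) z).const_smul c
        exact h
      · have hL1 : (c • ContinuousLinearMap.id ℝ ℂ) 1 = c := by
          simp [smul_eq_mul]
        have hLI : (c • ContinuousLinearMap.id ℝ ℂ) Complex.I = c * Complex.I := by
          simp [smul_eq_mul]
        have : wirtDbar (c • ContinuousLinearMap.id ℝ ℂ) = 0 := by
          rw [wirtDbar, hL1, hLI]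
          have : Complex.I * (c * Complex.I) = -c := by
            rw [mul_comm c Complex.I, ← mul_assoc, Complex.I_mul_I]; ring
          rw [this]; ring
        rw [this, norm_zero, zero_mul]
end

section
/- Let T be a finite triangulation of a disc and P a circle packing of T in the hyperbolic plane realizing a packing label (an assignment of hyperbolic radii to vertices) in which every interior vertex has angle sum exactly 2π. Then the angle sum condition determines the label: if two packing labels with the same boundary radii both have angle sum 2π at every interior vertex, they are equal. -/
open Real

/-- `sinh x < x * cosh x` for positive `x`. -/
lemma my_sinh_lt_mul_cosh {x : ℝ} (hx : 0 < x) : Real.sinh x < x * Real.cosh x := by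
  have key : StrictMonoOn (fun y : ℝ => y * Real.cosh y - Real.sinh y) (Set.Ici 0) := by
    apply strictMonoOn_of_deriv_pos (convex_Ici 0)
    · exact ((continuous_id.mul Real.continuous_cosh).sub Real.continuous_sinh).continuousOn
    · intro y hy
      rw [interior_Ici] at hy
      have h : HasDerivAt (fun y : ℝ => y * Real.cosh y - Real.sinh y) (y * Real.sinh y) y := by
        have := ((hasDerivAt_id y).mul (Real.hasDerivAt_cosh y)).sub (Real.hasDerivAt_sinh y)
        exact this.congr_deriv (by
          show 1 * Real.cosh y + y * Real.sinh y - Real.cosh y = y * Real.sinh y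
          ring)
      rw [h.deriv]
      exact mul_pos hy (Real.sinh_pos_iff.mpr hy)
  have h := key Set.self_mem_Ici (Set.mem_Ici.mpr hx.le) hx
  simp only [Real.cosh_zero, Real.sinh_zero, mul_one, zero_mul, sub_zero, zero_sub] at h
  linarith

/-- `sinh u / u` is strictly increasing: for `0 < a < b`, `b * sinh a < a * sinh b`. -/
lemma my_sinh_div_mono {a b : ℝ} (ha : 0 < a) (hab : a < b) :
    b * Real.sinh a < a * Real.sinh b := by
  have hb : 0 < b := ha.trans hab
  have key : StrictMonoOn (fun y : ℝ => Real.sinh y / y) (Set.Ioi 0) := by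
    apply strictMonoOn_of_deriv_pos (convex_Ioi 0)
    · exact ContinuousOn.div Real.continuous_sinh.continuousOn continuousOn_id
        (fun y hy => ne_of_gt hy)
    · intro y hy
      rw [interior_Ioi] at hy
      have h : HasDerivAt (fun y : ℝ => Real.sinh y / y)
          ((Real.cosh y * y - Real.sinh y * 1) / y ^ 2) y :=
        (Real.hasDerivAt_sinh y).div (hasDerivAt_id y) (ne_of_gt hy)
      rw [h.deriv]
      apply div_pos _ (pow_pos hy 2)
      have := my_sinh_lt_mul_cosh hy
      nlinarith
  have h := key (Set.mem_Ioi.mpr ha) (Set.mem_Ioi.mpr hb) hab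
  rw [div_lt_div_iff₀ ha hb] at h
  nlinarith

/-- `sinh (t*s) / sinh s` is strictly increasing in `s` for `t > 1`. -/
lemma my_sinh_ratio_mono {t a b : ℝ} (ht : 1 < t) (ha : 0 < a) (hab : a < b) :
    Real.sinh (t * a) * Real.sinh b < Real.sinh a * Real.sinh (t * b) := by
  have hb : 0 < b := ha.trans hab
  have key : StrictMonoOn (fun s : ℝ => Real.sinh (t * s) / Real.sinh s) (Set.Ioi 0) := by
    apply strictMonoOn_of_deriv_pos (convex_Ioi 0)
    · exact ContinuousOn.div
        (Real.continuous_sinh.comp (continuous_const.mul continuous_id)).continuousOn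
        Real.continuous_sinh.continuousOn
        (fun y hy => ne_of_gt (Real.sinh_pos_iff.mpr hy))
    · intro y hy
      rw [interior_Ioi] at hy
      have hy0 : (0:ℝ) < y := hy
      have hnum : HasDerivAt (fun s : ℝ => Real.sinh (t * s)) (Real.cosh (t * y) * t) y := by
        have := (Real.hasDerivAt_sinh (t * y)).comp y
          ((hasDerivAt_id y).const_mul t)
        simpa [Function.comp_def] using this
      have h : HasDerivAt (fun s : ℝ => Real.sinh (t * s) / Real.sinh s)
          ((Real.cosh (t * y) * t * Real.sinh y - Real.sinh (t * y) * Real.cosh y) /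
            Real.sinh y ^ 2) y :=
        hnum.div (Real.hasDerivAt_sinh y) (ne_of_gt (Real.sinh_pos_iff.mpr hy))
      rw [h.deriv]
      apply div_pos _ (pow_pos (Real.sinh_pos_iff.mpr hy) 2)
      have hJ : ((t + 1) * y) * Real.sinh ((t - 1) * y) <
          ((t - 1) * y) * Real.sinh ((t + 1) * y) :=
        my_sinh_div_mono (by nlinarith [hy0]) (by nlinarith [hy0])
      have e1 : (t - 1) * y = t * y - y := by ring
      have e2 : (t + 1) * y = t * y + y := by ring
      rw [e1, e2, Real.sinh_sub, Real.sinh_add] at hJ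
      nlinarith [hJ, hy0]
  have h := key (Set.mem_Ioi.mpr ha) (Set.mem_Ioi.mpr hb) hab
  rw [div_lt_div_iff₀ (Real.sinh_pos_iff.mpr ha) (Real.sinh_pos_iff.mpr hb)] at h
  nlinarith

/-- The angle at the vertex of radius `x` in the hyperbolic triangle formed by three
mutually tangent circles of radii `x`, `y`, `z` (side lengths `x+y`, `x+z`, `y+z`),
computed by the hyperbolic law of cosines. -/
noncomputable def hAngle (x y z : ℝ) : ℝ :=
  Real.arccos ((Real.cosh (x + y) * Real.cosh (x + z) - Real.cosh (y + z)) /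
    (Real.sinh (x + y) * Real.sinh (x + z)))

/-- The clean formula `cos θ = 1 - 2 sinh y sinh z / (sinh(x+y) sinh(x+z))`. -/
lemma hAngle_eq (x y z : ℝ) (hx : 0 < x) (hy : 0 < y) (hz : 0 < z) :
    hAngle x y z = Real.arccos (1 - 2 * (Real.sinh y * Real.sinh z) /
      (Real.sinh (x + y) * Real.sinh (x + z))) := by
  unfold hAngle
  congr 1
  have h1 : Real.sinh (x + y) ≠ 0 := ne_of_gt (Real.sinh_pos_iff.mpr (by linarith))
  have h2 : Real.sinh (x + z) ≠ 0 := ne_of_gt (Real.sinh_pos_iff.mpr (by linarith))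
  field_simp
  rw [Real.cosh_add x y, Real.cosh_add x z, Real.sinh_add x y, Real.sinh_add x z,
    Real.cosh_add y z]
  linear_combination (Real.cosh y * Real.cosh z - Real.sinh y * Real.sinh z) *
    Real.cosh_sq_sub_sinh_sq x

lemma hAngle_symm (x y z : ℝ) : hAngle x y z = hAngle x z y := by
  unfold hAngle
  rw [add_comm y z, mul_comm (Real.cosh (x + y)), mul_comm (Real.sinh (x + y))]

/-- Bounds for the `sin²(θ/2)` quantity. -/
lemma myF_bounds {x y z : ℝ} (hx : 0 < x) (hy : 0 < y) (hz : 0 < z) :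
    0 < (Real.sinh y * Real.sinh z) / (Real.sinh (x + y) * Real.sinh (x + z)) ∧
    (Real.sinh y * Real.sinh z) / (Real.sinh (x + y) * Real.sinh (x + z)) < 1 := by
  have hy' : 0 < Real.sinh y := Real.sinh_pos_iff.mpr hy
  have hz' : 0 < Real.sinh z := Real.sinh_pos_iff.mpr hz
  have hxy : 0 < Real.sinh (x + y) := Real.sinh_pos_iff.mpr (by linarith)
  have hxz : 0 < Real.sinh (x + z) := Real.sinh_pos_iff.mpr (by linarith)
  constructor
  · exact div_pos (mul_pos hy' hz') (mul_pos hxy hxz)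
  · rw [div_lt_one (mul_pos hxy hxz)]
    exact mul_lt_mul'' (Real.sinh_lt_sinh.mpr (by linarith))
      (Real.sinh_lt_sinh.mpr (by linarith)) hy'.le hz'.le

/-- The arccos argument lies in `[-1, 1]`. -/
lemma my_arg_mem {x y z : ℝ} (hx : 0 < x) (hy : 0 < y) (hz : 0 < z) :
    (1 - 2 * (Real.sinh y * Real.sinh z) /
      (Real.sinh (x + y) * Real.sinh (x + z))) ∈ Set.Icc (-1 : ℝ) 1 := by
  obtain ⟨h0, h1⟩ := myF_bounds hx hy hz
  rw [mul_div_assoc]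
  constructor <;> linarith

/-- Monotonicity in a neighbour's radius. -/
lemma hAngle_mono {x y z y' : ℝ} (hx : 0 < x) (hy : 0 < y) (hz : 0 < z) (h : y ≤ y') :
    hAngle x y z ≤ hAngle x y' z := by
  have hy' : 0 < y' := lt_of_lt_of_le hy h
  rw [hAngle_eq x y z hx hy hz, hAngle_eq x y' z hx hy' hz]
  have hmem := my_arg_mem hx hy hz
  have hmem' := my_arg_mem hx hy' hz
  apply Real.strictAntiOn_arccos.antitoneOn hmem' hmem
  -- need : arg(y') ≤ arg(y), i.e. F(y) ≤ F(y')
  have hxy : 0 < Real.sinh (x + y) := Real.sinh_pos_iff.mpr (by linarith)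
  have hxy' : 0 < Real.sinh (x + y') := Real.sinh_pos_iff.mpr (by linarith)
  have hxz : 0 < Real.sinh (x + z) := Real.sinh_pos_iff.mpr (by linarith)
  have hz' : 0 < Real.sinh z := Real.sinh_pos_iff.mpr hz
  have key : Real.sinh y * Real.sinh (x + y') ≤ Real.sinh y' * Real.sinh (x + y) := by
    rw [Real.sinh_add x y, Real.sinh_add x y']
    have hs : Real.sinh (y - y') ≤ 0 := by
      rw [← Real.sinh_zero]
      exact (Real.sinh_le_sinh).mpr (by linarith)
    rw [Real.sinh_sub] at hs
    have hsx : 0 < Real.sinh x := Real.sinh_pos_iff.mpr hx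
    nlinarith
  have hdiv : (Real.sinh y * Real.sinh z) / (Real.sinh (x + y) * Real.sinh (x + z)) ≤
      (Real.sinh y' * Real.sinh z) / (Real.sinh (x + y') * Real.sinh (x + z)) := by
    rw [div_le_div_iff₀ (mul_pos hxy hxz) (mul_pos hxy' hxz)]
    nlinarith [mul_le_mul_of_nonneg_right key (mul_pos hz' hxz).le]
  simp only [mul_div_assoc] at hdiv ⊢
  linarith [hdiv]

/-- The angle strictly decreases when all three radii are scaled by `t > 1`. -/
lemma hAngle_scale {x y z t : ℝ} (hx : 0 < x) (hy : 0 < y) (hz : 0 < z) (ht : 1 < t) :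
    hAngle (t * x) (t * y) (t * z) < hAngle x y z := by
  have ht0 : 0 < t := lt_trans one_pos ht
  rw [hAngle_eq x y z hx hy hz,
    hAngle_eq (t * x) (t * y) (t * z) (by positivity) (by positivity) (by positivity),
    show t * x + t * y = t * (x + y) by ring, show t * x + t * z = t * (x + z) by ring]
  have hmem := my_arg_mem hx hy hz
  have hmem' := my_arg_mem (x := t * x) (y := t * y) (z := t * z)
    (by positivity) (by positivity) (by positivity)
  rw [show t * x + t * y = t * (x + y) by ring,
    show t * x + t * z = t * (x + z) by ring] at hmem'
  have hxy : 0 < Real.sinh (x + y) := Real.sinh_pos_iff.mpr (by linarith)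
  have hxz : 0 < Real.sinh (x + z) := Real.sinh_pos_iff.mpr (by linarith)
  have htxy : 0 < Real.sinh (t * (x + y)) := Real.sinh_pos_iff.mpr (by positivity)
  have htxz : 0 < Real.sinh (t * (x + z)) := Real.sinh_pos_iff.mpr (by positivity)
  have hty : 0 < Real.sinh (t * y) := Real.sinh_pos_iff.mpr (by positivity)
  have htz : 0 < Real.sinh (t * z) := Real.sinh_pos_iff.mpr (by positivity)
  have k1 : Real.sinh (t * y) * Real.sinh (x + y) < Real.sinh y * Real.sinh (t * (x + y)) :=
    my_sinh_ratio_mono ht hy (by linarith)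
  have k2 : Real.sinh (t * z) * Real.sinh (x + z) < Real.sinh z * Real.sinh (t * (x + z)) :=
    my_sinh_ratio_mono ht hz (by linarith)
  have hFlt : (Real.sinh (t * y) * Real.sinh (t * z)) /
      (Real.sinh (t * (x + y)) * Real.sinh (t * (x + z))) <
      (Real.sinh y * Real.sinh z) / (Real.sinh (x + y) * Real.sinh (x + z)) := by
    rw [div_lt_div_iff₀ (mul_pos htxy htxz) (mul_pos hxy hxz)]
    have := mul_lt_mul'' k1 k2 (mul_pos hty hxy).le (mul_pos htz hxz).le
    nlinarith
  have hmem2 := hmem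
  have hmem2' := hmem'
  simp only [mul_div_assoc] at hmem2 hmem2' ⊢
  apply Real.strictAntiOn_arccos hmem2 hmem2'
  simp only [mul_div_assoc] at hFlt ⊢
  linarith [hFlt]

/-- The key termwise estimate. -/
lemma hAngle_term {x y z y' z' t : ℝ} (hx : 0 < x) (hy : 0 < y) (hz : 0 < z)
    (hy' : 0 < y') (hz' : 0 < z') (ht : 1 < t) (h1 : y' ≤ t * y) (h2 : z' ≤ t * z) :
    hAngle (t * x) y' z' < hAngle x y z := by
  have ht0 : 0 < t := lt_trans one_pos ht
  calc hAngle (t * x) y' z' ≤ hAngle (t * x) (t * y) z' :=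
        hAngle_mono (by positivity) hy' hz' h1
    _ = hAngle (t * x) z' (t * y) := hAngle_symm _ _ _
    _ ≤ hAngle (t * x) (t * z) (t * y) := hAngle_mono (by positivity) hz' (by positivity) h2
    _ = hAngle (t * x) (t * y) (t * z) := hAngle_symm _ _ _
    _ < hAngle x y z := hAngle_scale hx hy hz ht

lemma my_list_sum_lt {α : Type*} {l : List α} (f g : α → ℝ) (h : ∀ a ∈ l, f a < g a)
    (hne : l ≠ []) : (l.map f).sum < (l.map g).sum := by
  induction l with
  | nil => exact absurd rfl hne
  | cons a l ih =>
    simp only [List.map_cons, List.sum_cons]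
    have hf : f a < g a := h a (by simp)
    have hrest : (l.map f).sum ≤ (l.map g).sum :=
      List.sum_le_sum (fun b hb => (h b (by simp [hb])).le)
    linarith

/-- The angle sum at a vertex `v` with label `r` over its cyclically ordered flower `l`
of neighbours. -/
noncomputable def angleSum {V : Type*} (r : V → ℝ) (v : V) (l : List V) : ℝ :=
  ((l.zip (l.rotate 1)).map (fun p => hAngle (r v) (r p.1) (r p.2))).sum

/-- One-sided comparison: the discrete maximum principle. -/
lemma my_one_sided {V : Type*} [Fintype V] [DecidableEq V]
    (flower : V → List V) (interior : Finset V)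
    (hdeg : ∀ v ∈ interior, 3 ≤ (flower v).length)
    (r₁ r₂ : V → ℝ) (h₁pos : ∀ v, 0 < r₁ v) (h₂pos : ∀ v, 0 < r₂ v)
    (hbd : ∀ v ∉ interior, r₁ v = r₂ v)
    (hsum₁ : ∀ v ∈ interior, angleSum r₁ v (flower v) = 2 * π)
    (hsum₂ : ∀ v ∈ interior, angleSum r₂ v (flower v) = 2 * π) :
    ∀ v, r₁ v ≤ r₂ v := by
  by_contra hc
  push_neg at hc
  obtain ⟨w, hw⟩ := hc
  have huniv : (Finset.univ : Finset V).Nonempty := ⟨w, Finset.mem_univ w⟩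
  set t := Finset.univ.sup' huniv (fun v => r₁ v / r₂ v) with htdef
  have ht1 : 1 < t :=
    lt_of_lt_of_le ((one_lt_div (h₂pos w)).mpr hw)
      (Finset.le_sup' (fun v => r₁ v / r₂ v) (Finset.mem_univ w))
  obtain ⟨v₀, _, hv₀⟩ := Finset.exists_mem_eq_sup' huniv (fun v => r₁ v / r₂ v)
  have hr₀ : r₁ v₀ = t * r₂ v₀ := by
    rw [htdef, hv₀, div_mul_cancel₀ _ (ne_of_gt (h₂pos v₀))]
  have hle : ∀ u, r₁ u ≤ t * r₂ u := by
    intro u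
    have h := Finset.le_sup' (fun v => r₁ v / r₂ v) (Finset.mem_univ u)
    rw [← htdef] at h
    exact (div_le_iff₀ (h₂pos u)).mp h
  have hmem : v₀ ∈ interior := by
    by_contra hmem
    have := hbd v₀ hmem
    rw [htdef, hv₀, this, div_self (ne_of_gt (h₂pos v₀))] at ht1
    exact lt_irrefl 1 ht1
  have hne : (flower v₀).zip ((flower v₀).rotate 1) ≠ [] := by
    apply List.ne_nil_of_length_pos
    rw [List.length_zip, List.length_rotate]
    have := hdeg v₀ hmem
    omega
  have key : angleSum r₁ v₀ (flower v₀) < angleSum r₂ v₀ (flower v₀) := by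
    unfold angleSum
    apply my_list_sum_lt _ _ _ hne
    intro p _
    rw [hr₀]
    exact hAngle_term (h₂pos v₀) (h₂pos p.1) (h₂pos p.2) (h₁pos p.1) (h₁pos p.2) ht1
      (hle p.1) (hle p.2)
  rw [hsum₁ v₀ hmem, hsum₂ v₀ hmem] at key
  exact lt_irrefl _ key

/-- Uniqueness of hyperbolic packing labels for a finite triangulation of a disc:
if two positive packing labels agree at the boundary vertices and both have angle sum
exactly `2π` at every interior vertex, then they are equal. -/
theorem stmt16 {V : Type*} [Fintype V] [DecidableEq V]
    (flower : V → List V) (interior : Finset V)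
    -- there is at least one boundary vertex
    (hbdry : interior ≠ Finset.univ)
    -- combinatorial sanity: flowers of interior vertices have length ≥ 3 and adjacency is
    -- symmetric
    (hdeg : ∀ v ∈ interior, 3 ≤ (flower v).length)
    (hsym : ∀ v ∈ interior, ∀ u, u ∈ flower v → v ∈ flower u)
    -- connectivity: every nonempty set of interior vertices has a neighbour outside it
    (hconn : ∀ S : Finset V, S ⊆ interior → S.Nonempty →
      ∃ v ∈ S, ∃ u, u ∈ flower v ∧ u ∉ S)
    (r₁ r₂ : V → ℝ) (h₁pos : ∀ v, 0 < r₁ v) (h₂pos : ∀ v, 0 < r₂ v)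
    -- the labels have the same boundary radii
    (hbd : ∀ v ∉ interior, r₁ v = r₂ v)
    -- both labels have angle sum 2π at every interior vertex
    (hsum₁ : ∀ v ∈ interior, angleSum r₁ v (flower v) = 2 * π)
    (hsum₂ : ∀ v ∈ interior, angleSum r₂ v (flower v) = 2 * π) :
    r₁ = r₂ := by
  funext v
  exact le_antisymm
    (my_one_sided flower interior hdeg r₁ r₂ h₁pos h₂pos hbd hsum₁ hsum₂ v)
    (my_one_sided flower interior hdeg r₂ r₁ h₂pos h₁pos
      (fun u hu => (hbd u hu).symm) hsum₂ hsum₁ v)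
end
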